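/- If multiplication by n equals repeated addition of n, then strong and weak divisibility by n are equivalent: a set A is strongly divisible by n if and only if it is weakly divisible by n. -/

import Mathlib

/-- Multiplication by `n` equals repeated addition of `n`. -/
def MulEqRepeatedAdd (n : ℕ) : Prop :=
  ∀ (B U : Type) (X : B → Set U), Pairwise (Function.onFun Disjoint X) →
    (∀ b, Nonempty (X b ≃ Fin n)) → Nonempty ((⋃ b, X b) ≃ B × Fin n)

/-- `A` is strongly divisible by `n`. -/
def StronglyDivisible (n : ℕ) (A : Type) : Prop :=
  ∃ B : Type, Nonempty (A ≃ B × Fin n)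

/-- `A` is weakly divisible by `n`. -/
def WeaklyDivisible (n : ℕ) (A : Type) : Prop :=
  ∃ (B U : Type) (X : B → Set U), Pairwise (Function.onFun Disjoint X) ∧
    (∀ b, Nonempty (X b ≃ Fin n)) ∧ Nonempty (A ≃ (⋃ b, X b))

theorem mulEqRepeatedAdd_implies_div_equiv (n : ℕ) (hn : 0 < n)
    (hmul : MulEqRepeatedAdd n) :
    ∀ A : Type, StronglyDivisible n A ↔ WeaklyDivisible n A := by
  intro A
  constructor
  · rintro ⟨B, ⟨e⟩⟩
    refine ⟨B, B × Fin n, fun b => {p | p.1 = b}, ?_, ?_, ?_⟩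
    · intro b b' hbb'
      simp only [Function.onFun, Set.disjoint_left]
      rintro p (hp : p.1 = b) (hp' : p.1 = b')
      exact hbb' (hp ▸ hp')
    · intro b
      exact ⟨{
        toFun := fun p => p.1.2
        invFun := fun i => ⟨(b, i), rfl⟩
        left_inv := by rintro ⟨⟨b', i⟩, (rfl : b' = b)⟩; rfl
        right_inv := fun i => rfl }⟩
    · have hu : (⋃ b, {p : B × Fin n | p.1 = b}) = Set.univ := by
        ext p; simp
      exact ⟨e.trans ((Equiv.Set.univ _).symm.trans (Equiv.setCongr hu.symm))⟩
  · rintro ⟨B, U, X, hdisj, hfin, ⟨e⟩⟩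
    obtain ⟨f⟩ := hmul B U X hdisj hfin
    exact ⟨B, ⟨e.trans f⟩⟩
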